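/- arXiv:1406.3757 — 2 statements merged into one kernel-verified Lean document; each statement's English description precedes it below -/
import Mathlib

section
/- Let m, n ≥ 1, p an odd prime, r ≥ 1, and s, t ∈ Z. Let ρ₀ be the half-sum of positive even roots of GL(m|n), ρ₁ the half-sum of positive odd roots, ρ = ρ₀ − ρ₁, and ρ_{s,t} = s(ε₁+⋯+ε_m) + t(ε_{m+1}+⋯+ε_{m+n}). Then p does not divide ((p^r−1)ρ₀ + ρ_{s,t} + ρ, ε_i − ε_j) for all pairs 1 ≤ i ≤ m < j ≤ m+n if and only if p does not divide ((p^r+1)/2)·m + ((p^r−1)/2)·n + s + t. -/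
open Finset

/-- The standard basis weight `ε i` of `GL(m|n)`, with rational coefficients. -/
noncomputable def stmt9.eps {N : ℕ} (i : Fin N) : Fin N → ℚ := Pi.single i 1

/-- The supersymmetric bilinear form on weights: `(ε i, ε j) = δ_ij` for `i, j < m`
and `(ε i, ε j) = -δ_ij` for `i, j ≥ m`. -/
noncomputable def stmt9.form (m : ℕ) {N : ℕ} (x y : Fin N → ℚ) : ℚ :=
  ∑ i : Fin N, if (i : ℕ) < m then x i * y i else - (x i * y i)

/-- Half-sum of the positive even roots of `GL(m|n)`. -/
noncomputable def stmt9.rho0 (m n : ℕ) : Fin (m + n) → ℚ :=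
  (1 / 2 : ℚ) • ∑ q ∈ Finset.univ.filter
      (fun q : Fin (m + n) × Fin (m + n) => q.1 < q.2 ∧
        (((q.1 : ℕ) < m ∧ (q.2 : ℕ) < m) ∨ (m ≤ (q.1 : ℕ) ∧ m ≤ (q.2 : ℕ)))),
    (stmt9.eps q.1 - stmt9.eps q.2)

/-- Half-sum of the positive odd roots of `GL(m|n)`. -/
noncomputable def stmt9.rho1 (m n : ℕ) : Fin (m + n) → ℚ :=
  (1 / 2 : ℚ) • ∑ q ∈ Finset.univ.filter
      (fun q : Fin (m + n) × Fin (m + n) => (q.1 : ℕ) < m ∧ m ≤ (q.2 : ℕ)),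
    (stmt9.eps q.1 - stmt9.eps q.2)

/-- The weight `ρ_{s,t} = s(ε₁+⋯+ε_m) + t(ε_{m+1}+⋯+ε_{m+n})`. -/
noncomputable def stmt9.rhost (m n : ℕ) (s t : ℤ) : Fin (m + n) → ℚ :=
  (s : ℚ) • ∑ i ∈ Finset.univ.filter (fun i : Fin (m + n) => (i : ℕ) < m), stmt9.eps i +
  (t : ℚ) • ∑ i ∈ Finset.univ.filter (fun i : Fin (m + n) => m ≤ (i : ℕ)), stmt9.eps i

/-- `p` divides a rational number `x` iff `x = p·z` for some integer `z`. -/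
def stmt9.pdvd (p : ℕ) (x : ℚ) : Prop := ∃ z : ℤ, x = (p : ℚ) * z


namespace s9h
open Finset

lemma eps_apply {N : ℕ} (a k : Fin N) : stmt9.eps a k = if k = a then 1 else 0 := by
  simp [stmt9.eps, Pi.single_apply]

lemma card_filter_Ico (N a b : ℕ) (hb : b ≤ N) :
    (Finset.univ.filter (fun x : Fin N => a ≤ (x : ℕ) ∧ (x : ℕ) < b)).card = b - a := by
  have himg : (Finset.univ.filter (fun x : Fin N => a ≤ (x : ℕ) ∧ (x : ℕ) < b)).image
      Fin.val = Finset.Ico a b := by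
    ext v
    simp only [Finset.mem_image, Finset.mem_filter, Finset.mem_univ, true_and, Finset.mem_Ico]
    constructor
    · rintro ⟨x, hx, rfl⟩; exact hx
    · rintro ⟨h1, h2⟩; exact ⟨⟨v, lt_of_lt_of_le h2 hb⟩, ⟨h1, h2⟩, rfl⟩
  rw [← Nat.card_Ico a b, ← himg, Finset.card_image_of_injective _ Fin.val_injective]

lemma pair_sum {N : ℕ} (P : Fin N → Fin N → Prop) [∀ a b, Decidable (P a b)] (k : Fin N) :
    ∑ q ∈ Finset.univ.filter (fun q : Fin N × Fin N => P q.1 q.2),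
      ((stmt9.eps q.1 - stmt9.eps q.2) k)
    = ((Finset.univ.filter (fun b => P k b)).card : ℚ)
      - ((Finset.univ.filter (fun a => P a k)).card : ℚ) := by
  rw [Finset.sum_filter, Fintype.sum_prod_type]
  simp only [Pi.sub_apply, eps_apply]
  have key : ∀ a b : Fin N,
      (if P a b then ((if k = a then (1:ℚ) else 0) - (if k = b then 1 else 0)) else 0)
      = (if k = a then (if P a b then (1:ℚ) else 0) else 0)
        - (if k = b then (if P a b then (1:ℚ) else 0) else 0) := by
    intro a b
    by_cases h1 : P a b <;> by_cases h2 : k = a <;> by_cases h3 : k = b <;> simp [h1, h2, h3]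
  simp only [key, Finset.sum_sub_distrib]
  congr 1
  · rw [Finset.sum_comm]
    simp only [Finset.sum_ite_eq, Finset.mem_univ, if_true]
    rw [Finset.sum_boole]
  · simp only [Finset.sum_ite_eq, Finset.mem_univ, if_true]
    rw [Finset.sum_boole]

lemma rho0_apply_lt (m n : ℕ) (k : Fin (m + n)) (hk : (k : ℕ) < m) :
    stmt9.rho0 m n k = ((m : ℚ) - 1 - 2 * (k : ℕ)) / 2 := by
  unfold stmt9.rho0
  rw [Pi.smul_apply, Finset.sum_apply, smul_eq_mul]
  rw [pair_sum (fun a b : Fin (m + n) => a < b ∧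
      (((a : ℕ) < m ∧ (b : ℕ) < m) ∨ (m ≤ (a : ℕ) ∧ m ≤ (b : ℕ)))) k]
  have e1 : Finset.univ.filter (fun b : Fin (m + n) => k < b ∧
        (((k : ℕ) < m ∧ (b : ℕ) < m) ∨ (m ≤ (k : ℕ) ∧ m ≤ (b : ℕ))))
      = Finset.univ.filter (fun b : Fin (m + n) => (k : ℕ) + 1 ≤ (b : ℕ) ∧ (b : ℕ) < m) := by
    apply Finset.filter_congr; intro b _; simp only [Fin.lt_def]; constructor <;> (intro h; omega)
  have e2 : Finset.univ.filter (fun a : Fin (m + n) => a < k ∧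
        (((a : ℕ) < m ∧ (k : ℕ) < m) ∨ (m ≤ (a : ℕ) ∧ m ≤ (k : ℕ))))
      = Finset.univ.filter (fun a : Fin (m + n) => 0 ≤ (a : ℕ) ∧ (a : ℕ) < (k : ℕ)) := by
    apply Finset.filter_congr; intro b _; simp only [Fin.lt_def]; constructor <;> (intro h; omega)
  rw [e1, e2, card_filter_Ico _ _ _ (by omega), card_filter_Ico _ _ _ (by omega)]
  rw [Nat.cast_sub (by omega), Nat.sub_zero]
  push_cast
  ring

lemma rho0_apply_ge (m n : ℕ) (k : Fin (m + n)) (hk : m ≤ (k : ℕ)) :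
    stmt9.rho0 m n k = (2 * (m : ℚ) + (n : ℚ) - 1 - 2 * (k : ℕ)) / 2 := by
  unfold stmt9.rho0
  rw [Pi.smul_apply, Finset.sum_apply, smul_eq_mul]
  rw [pair_sum (fun a b : Fin (m + n) => a < b ∧
      (((a : ℕ) < m ∧ (b : ℕ) < m) ∨ (m ≤ (a : ℕ) ∧ m ≤ (b : ℕ)))) k]
  have e1 : Finset.univ.filter (fun b : Fin (m + n) => k < b ∧
        (((k : ℕ) < m ∧ (b : ℕ) < m) ∨ (m ≤ (k : ℕ) ∧ m ≤ (b : ℕ))))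
      = Finset.univ.filter (fun b : Fin (m + n) => (k : ℕ) + 1 ≤ (b : ℕ) ∧ (b : ℕ) < m + n) := by
    apply Finset.filter_congr; intro b _; simp only [Fin.lt_def]
    have := b.isLt
    constructor <;> (intro h; omega)
  have e2 : Finset.univ.filter (fun a : Fin (m + n) => a < k ∧
        (((a : ℕ) < m ∧ (k : ℕ) < m) ∨ (m ≤ (a : ℕ) ∧ m ≤ (k : ℕ))))
      = Finset.univ.filter (fun a : Fin (m + n) => m ≤ (a : ℕ) ∧ (a : ℕ) < (k : ℕ)) := by
    apply Finset.filter_congr; intro b _; simp only [Fin.lt_def]; constructor <;> (intro h; omega)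
  rw [e1, e2, card_filter_Ico _ _ _ (by omega), card_filter_Ico _ _ _ (by omega)]
  have hk2 : (k : ℕ) < m + n := k.isLt
  rw [Nat.cast_sub (by omega), Nat.cast_sub (by omega)]
  push_cast
  ring

lemma rho1_apply_lt (m n : ℕ) (k : Fin (m + n)) (hk : (k : ℕ) < m) :
    stmt9.rho1 m n k = (n : ℚ) / 2 := by
  unfold stmt9.rho1
  rw [Pi.smul_apply, Finset.sum_apply, smul_eq_mul]
  rw [pair_sum (fun a b : Fin (m + n) => (a : ℕ) < m ∧ m ≤ (b : ℕ)) k]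
  have e1 : Finset.univ.filter (fun b : Fin (m + n) => (k : ℕ) < m ∧ m ≤ (b : ℕ))
      = Finset.univ.filter (fun b : Fin (m + n) => m ≤ (b : ℕ) ∧ (b : ℕ) < m + n) := by
    apply Finset.filter_congr; intro b _
    have := b.isLt; constructor <;> (intro h; omega)
  have e2 : Finset.univ.filter (fun a : Fin (m + n) => (a : ℕ) < m ∧ m ≤ (k : ℕ)) = ∅ := by
    rw [Finset.filter_eq_empty_iff]; intro a _; omega
  rw [e1, e2, card_filter_Ico _ _ _ (by omega), Finset.card_empty]
  rw [Nat.cast_sub (by omega)]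
  push_cast
  ring

lemma rho1_apply_ge (m n : ℕ) (k : Fin (m + n)) (hk : m ≤ (k : ℕ)) :
    stmt9.rho1 m n k = -(m : ℚ) / 2 := by
  unfold stmt9.rho1
  rw [Pi.smul_apply, Finset.sum_apply, smul_eq_mul]
  rw [pair_sum (fun a b : Fin (m + n) => (a : ℕ) < m ∧ m ≤ (b : ℕ)) k]
  have e1 : Finset.univ.filter (fun b : Fin (m + n) => (k : ℕ) < m ∧ m ≤ (b : ℕ)) = ∅ := by
    rw [Finset.filter_eq_empty_iff]; intro a _; omega
  have e2 : Finset.univ.filter (fun a : Fin (m + n) => (a : ℕ) < m ∧ m ≤ (k : ℕ))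
      = Finset.univ.filter (fun a : Fin (m + n) => 0 ≤ (a : ℕ) ∧ (a : ℕ) < m) := by
    apply Finset.filter_congr; intro b _; constructor <;> (intro h; omega)
  rw [e1, e2, card_filter_Ico _ _ _ (by omega), Finset.card_empty, Nat.sub_zero]
  push_cast
  ring

lemma rhost_apply (m n : ℕ) (s t : ℤ) (k : Fin (m + n)) :
    stmt9.rhost m n s t k = if (k : ℕ) < m then (s : ℚ) else (t : ℚ) := by
  unfold stmt9.rhost
  rw [Pi.add_apply, Pi.smul_apply, Pi.smul_apply, Finset.sum_apply, Finset.sum_apply,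
    smul_eq_mul, smul_eq_mul]
  simp only [eps_apply]
  rw [Finset.sum_ite_eq, Finset.sum_ite_eq]
  by_cases hk : (k : ℕ) < m <;> simp [hk]

lemma form_apply (m n : ℕ) (x : Fin (m + n) → ℚ) (i j : Fin (m + n))
    (hi : (i : ℕ) < m) (hj : m ≤ (j : ℕ)) :
    stmt9.form m x (stmt9.eps i - stmt9.eps j) = x i + x j := by
  have hij : i ≠ j := by intro h; rw [h] at hi; omega
  unfold stmt9.form
  have key : ∀ k : Fin (m + n),
      (if (k : ℕ) < m then x k * (stmt9.eps i - stmt9.eps j) k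
        else -(x k * (stmt9.eps i - stmt9.eps j) k))
      = (if k = i then x i else 0) + (if k = j then x j else 0) := by
    intro k
    by_cases h2 : k = i
    · subst h2; simp [Pi.sub_apply, eps_apply, hi, hij, Ne.symm hij]
    · by_cases h3 : k = j
      · subst h3
        have : ¬ ((k : ℕ) < m) := by omega
        simp [Pi.sub_apply, eps_apply, this, h2]
      · by_cases hk : (k : ℕ) < m <;> simp [Pi.sub_apply, eps_apply, h2, h3, hk]
  simp only [key, Finset.sum_add_distrib, Finset.sum_ite_eq', Finset.mem_univ, if_true]

lemma pdvd_int (p : ℕ) (z : ℤ) : stmt9.pdvd p (z : ℚ) ↔ (p : ℤ) ∣ z := by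
  constructor
  · rintro ⟨w, hw⟩; exact ⟨w, by exact_mod_cast hw⟩
  · rintro ⟨w, hw⟩; exact ⟨w, by rw [hw]; push_cast; ring⟩

end s9h

/-- with `ρ = ρ₀ - ρ₁`, the weight `(p^r−1)ρ₀ + ρ_{s,t}` satisfies
`p ∤ ((p^r−1)ρ₀ + ρ_{s,t} + ρ, ε_i − ε_j)` for all `1 ≤ i ≤ m < j ≤ m+n` if and only if
`p ∤ ((p^r+1)/2)·m + ((p^r−1)/2)·n + s + t`. -/
theorem stmt_9 (m n r : ℕ) (hm : 1 ≤ m) (hn : 1 ≤ n) (hr : 1 ≤ r)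
    (p : ℕ) (hp : p.Prime) (hodd : Odd p) (s t : ℤ) :
    (∀ i j : Fin (m + n), (i : ℕ) < m → m ≤ (j : ℕ) →
      ¬ stmt9.pdvd p (stmt9.form m
          (((p : ℚ) ^ r - 1) • stmt9.rho0 m n + stmt9.rhost m n s t +
            (stmt9.rho0 m n - stmt9.rho1 m n))
          (stmt9.eps i - stmt9.eps j))) ↔
    ¬ ((p : ℤ) ∣ (((p : ℤ) ^ r + 1) / 2 * m + ((p : ℤ) ^ r - 1) / 2 * n + s + t)) := by
  have hoddP : Odd ((p : ℤ) ^ r) := by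
    have h1 : Odd (p : ℤ) := by exact_mod_cast hodd
    exact h1.pow
  obtain ⟨c, hc⟩ := hoddP
  have hdiv1 : ((p : ℤ) ^ r + 1) / 2 = c + 1 := by omega
  have hdiv2 : ((p : ℤ) ^ r - 1) / 2 = c := by omega
  have hq : (p : ℚ) ^ r = 2 * (c : ℚ) + 1 := by
    exact_mod_cast congrArg (fun z : ℤ => (z : ℚ)) hc
  rw [hdiv1, hdiv2]
  have key : ∀ i j : Fin (m + n), (i : ℕ) < m → m ≤ (j : ℕ) →
      (stmt9.pdvd p (stmt9.form m
          (((p : ℚ) ^ r - 1) • stmt9.rho0 m n + stmt9.rhost m n s t +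
            (stmt9.rho0 m n - stmt9.rho1 m n))
          (stmt9.eps i - stmt9.eps j))
        ↔ (p : ℤ) ∣ ((c + 1) * m + c * n + s + t)) := by
    intro i j hi hj
    have hform : stmt9.form m
          (((p : ℚ) ^ r - 1) • stmt9.rho0 m n + stmt9.rhost m n s t +
            (stmt9.rho0 m n - stmt9.rho1 m n))
          (stmt9.eps i - stmt9.eps j)
        = ((((c + 1) * m + c * n + s + t)
            - (p : ℤ) ^ r * (1 + ((i : ℕ) : ℤ) + ((j : ℕ) : ℤ) - (m : ℤ)) : ℤ) : ℚ) := by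
      rw [s9h.form_apply m n _ i j hi hj]
      simp only [Pi.add_apply, Pi.sub_apply, Pi.smul_apply, smul_eq_mul]
      rw [s9h.rho0_apply_lt m n i hi, s9h.rho0_apply_ge m n j hj, s9h.rho1_apply_lt m n i hi,
        s9h.rho1_apply_ge m n j hj, s9h.rhost_apply, s9h.rhost_apply,
        if_pos hi, if_neg (by omega)]
      push_cast
      rw [hq]
      ring
    rw [hform, s9h.pdvd_int]
    have hpK : (p : ℤ) ∣ (p : ℤ) ^ r * (1 + ((i : ℕ) : ℤ) + ((j : ℕ) : ℤ) - (m : ℤ)) :=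
      dvd_mul_of_dvd_left (dvd_pow_self _ (by omega)) _
    constructor
    · intro h
      have := h.add hpK
      simpa using this
    · intro h
      exact h.sub hpK
  constructor
  · intro h hC
    exact h ⟨0, by omega⟩ ⟨m, by omega⟩ (show (0 : ℕ) < m from hm) (le_refl m)
      ((key ⟨0, by omega⟩ ⟨m, by omega⟩ (show (0 : ℕ) < m from hm) (le_refl m)).mpr hC)
  · intro h i j hi hj hdvd
    exact h ((key i j hi hj).mp hdvd)
end

section
/- Let K be a field of characteristic p, W a K-vector space with basis w₁,…,w_{m+n} (m,n ≥ 1), and consider the operators e_{ij} (1 ≤ i ≤ m < j ≤ m+n) acting on the space V_k with basis {w₊^I w₋^β : I ⊆ {1,…,m}, β ∈ Z_{≥0}^n, |I| + |β| = k} by e_{ij}·(w₊^I w₋^β) = β_{j−m} · w₊^{I∪{i}} w₋^{β − e_{j−m}} if i ∉ I, and 0 if i ∈ I (where w₊^{I∪{i}} carries the appropriate sign and the result is 0 when β_{j−m}=0). Then the common kernel of all e_{ij} is spanned by: all w₊^I w₋^β with |I| < m and every β_t divisible by p, together with all w₊^{{1,…,m}} w₋^β (only when k ≥ m). -/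
open Finset

/-- Index set for the monomial basis `w₊^I w₋^β` of `Λ^k(W)` for `GL(m|n)`:
pairs `(I, β)` with `I ⊆ {1,…,m}`, `β ∈ ℤ_{≥0}^n` and `|I| + |β| = k`. -/
def stmt11.Idx (m n k : ℕ) : Type :=
  {x : Finset (Fin m) × (Fin n → ℕ) // x.1.card + ∑ t, x.2 t = k}

/-- The space `V_k` (the `k`-th super exterior power of `W` in its monomial basis). -/
def stmt11.V (K : Type*) [Field K] (m n k : ℕ) : Type _ := stmt11.Idx m n k →₀ K

noncomputable instance (K : Type*) [Field K] (m n k : ℕ) :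
    AddCommGroup (stmt11.V K m n k) := Finsupp.instAddCommGroup

noncomputable instance (K : Type*) [Field K] (m n k : ℕ) :
    Module K (stmt11.V K m n k) := Finsupp.module _ _

/-- The image of the basis vector `w₊^I w₋^β` under the operator
`e_{ij} = (multiplication by w_i) ∘ ∂/∂x_j` (with the Koszul sign). -/
noncomputable def stmt11.target (K : Type*) [Field K] {m n k : ℕ}
    (i : Fin m) (j : Fin n) (x : stmt11.Idx m n k) : stmt11.V K m n k :=
  if h : i ∉ x.1.1 ∧ x.1.2 j ≠ 0 then
    (((-1 : K) ^ (x.1.1.filter (fun a => a < i)).card) * (x.1.2 j : K)) •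
      Finsupp.single
        ⟨(insert i x.1.1, Function.update x.1.2 j (x.1.2 j - 1)), by
          have h1 : (insert i x.1.1).card = x.1.1.card + 1 :=
            Finset.card_insert_of_notMem h.1
          have h2 : ∑ t, Function.update x.1.2 j (x.1.2 j - 1) t =
              (x.1.2 j - 1) + ∑ t ∈ Finset.univ.erase j, x.1.2 t := by
            rw [← Finset.add_sum_erase _ _ (Finset.mem_univ j)]
            simp [Function.update_apply, Finset.sum_congr rfl]
            exact Finset.sum_congr rfl fun t ht => by
              simp [Function.update_apply, (Finset.mem_erase.mp ht).1]
          have h3 : x.1.2 j + ∑ t ∈ Finset.univ.erase j, x.1.2 t = ∑ t, x.1.2 t :=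
            Finset.add_sum_erase _ _ (Finset.mem_univ j)
          have hx := x.2
          have hj := h.2
          simp only [h1, h2]
          omega⟩ 1
  else 0

/-- The operator `e_{ij}` on `V_k`. -/
noncomputable def stmt11.e (K : Type*) [Field K] {m n k : ℕ} (i : Fin m) (j : Fin n) :
    stmt11.V K m n k →ₗ[K] stmt11.V K m n k :=
  Finsupp.lsum K fun x => LinearMap.toSpanSingleton K _ (stmt11.target K i j x)


namespace stmt11

lemma sum_update {n : ℕ} (j : Fin n) (β : Fin n → ℕ) (hj : β j ≠ 0) :
    ∑ t, Function.update β j (β j - 1) t = (∑ t, β t) - 1 := by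
  rw [← Finset.add_sum_erase _ _ (Finset.mem_univ j),
      ← Finset.add_sum_erase _ β (Finset.mem_univ j), Function.update_self,
      Finset.sum_congr rfl (fun t ht => Function.update_of_ne (Finset.mem_erase.mp ht).1 _ _)]
  omega

variable {m n k : ℕ}

def tgt (i : Fin m) (j : Fin n) (x : Idx m n k)
    (h : i ∉ x.1.1 ∧ x.1.2 j ≠ 0) : Idx m n k :=
  ⟨(insert i x.1.1, Function.update x.1.2 j (x.1.2 j - 1)), by
    have h1 := Finset.card_insert_of_notMem h.1
    have h2 := sum_update j x.1.2 h.2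
    have h3 : 1 ≤ ∑ t, x.1.2 t :=
      le_trans (Nat.one_le_iff_ne_zero.2 h.2)
        (Finset.single_le_sum (fun _ _ => Nat.zero_le _) (Finset.mem_univ j))
    have hx := x.2
    simp only [h1, h2]
    omega⟩

lemma tgt_inj {i : Fin m} {j : Fin n} {x x' : Idx m n k}
    (h : i ∉ x.1.1 ∧ x.1.2 j ≠ 0) (h' : i ∉ x'.1.1 ∧ x'.1.2 j ≠ 0)
    (he : tgt i j x h = tgt i j x' h') : x = x' := by
  have hv := congrArg Subtype.val he
  have hI : insert i x.1.1 = insert i x'.1.1 := congrArg Prod.fst hv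
  have hβu : Function.update x.1.2 j (x.1.2 j - 1) =
      Function.update x'.1.2 j (x'.1.2 j - 1) := congrArg Prod.snd hv
  have hI2 : x.1.1 = x'.1.1 := by
    rw [← Finset.erase_insert h.1, ← Finset.erase_insert h'.1, hI]
  have hoff : ∀ t, t ≠ j → x.1.2 t = x'.1.2 t := by
    intro t ht
    have := congrFun hβu t
    rwa [Function.update_of_ne ht, Function.update_of_ne ht] at this
  have hsum : ∑ t, x.1.2 t = ∑ t, x'.1.2 t := by
    have hx := x.2; have hx' := x'.2
    rw [hI2] at hx; omega
  have hj : x.1.2 j = x'.1.2 j := by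
    rw [← Finset.add_sum_erase _ x.1.2 (Finset.mem_univ j),
        ← Finset.add_sum_erase _ x'.1.2 (Finset.mem_univ j)] at hsum
    have : ∑ t ∈ Finset.univ.erase j, x.1.2 t = ∑ t ∈ Finset.univ.erase j, x'.1.2 t :=
      Finset.sum_congr rfl fun t ht => hoff t (Finset.mem_erase.mp ht).1
    omega
  have hβ : x.1.2 = x'.1.2 := funext fun t => by
    by_cases ht : t = j
    · rw [ht]; exact hj
    · exact hoff t ht
  exact Subtype.ext (Prod.ext hI2 hβ)

variable {K : Type*} [Field K]

lemma target_eq (i : Fin m) (j : Fin n) (x : Idx m n k)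
    (h : i ∉ x.1.1 ∧ x.1.2 j ≠ 0) :
    target K i j x =
      (((-1 : K) ^ (x.1.1.filter (fun a => a < i)).card) * (x.1.2 j : K)) •
        Finsupp.single (tgt i j x h) 1 := by
  rw [target, dif_pos h]
  rfl

lemma target_eq_zero (i : Fin m) (j : Fin n) (x : Idx m n k)
    (h : ¬ (i ∉ x.1.1 ∧ x.1.2 j ≠ 0)) : target K i j x = 0 := by
  rw [target, dif_neg h]

lemma e_apply (i : Fin m) (j : Fin n) (v : V K m n k) :
    e K i j v = v.sum fun x c => c • target K i j x := by
  rfl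

lemma e_single (i : Fin m) (j : Fin n) (x : Idx m n k) :
    e K i j (Finsupp.single x 1) = target K i j x := by
  show (Finsupp.single x (1:K)).sum (fun x c => c • target K i j x) = _
  rw [Finsupp.sum_single_index] <;> simp

noncomputable def toF : V K m n k →+ (Idx m n k →₀ K) :=
  { toFun := fun v => v, map_zero' := rfl, map_add' := fun _ _ => rfl }

lemma toF_inj {a b : V K m n k} (h : toF a = toF b) : a = b := h

lemma toF_smul (c : K) (w : V K m n k) : toF (c • w) = c • toF w := rfl

lemma toF_single (a : Idx m n k) (b : K) :
    toF (Finsupp.single a b : V K m n k) = Finsupp.single a b := rfl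

lemma target_at_ne (i : Fin m) (j : Fin n) {x : Idx m n k}
    (h : i ∉ x.1.1 ∧ x.1.2 j ≠ 0) {x' : Idx m n k} (hne : x' ≠ x) :
    toF (target K i j x') (tgt i j x h) = 0 := by
  by_cases h' : i ∉ x'.1.1 ∧ x'.1.2 j ≠ 0
  · rw [target_eq i j x' h']
    show ((((-1 : K) ^ (x'.1.1.filter (fun a => a < i)).card) * (x'.1.2 j : K)) •
      Finsupp.single (tgt i j x' h') (1:K) : Idx m n k →₀ K) (tgt i j x h) = 0
    rw [Finsupp.smul_apply,
      Finsupp.single_eq_of_ne' fun he => hne (tgt_inj h' h he), smul_zero]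
  · rw [target_eq_zero i j x' h', map_zero]
    rfl

lemma target_at_self (i : Fin m) (j : Fin n) {x : Idx m n k}
    (h : i ∉ x.1.1 ∧ x.1.2 j ≠ 0) :
    toF (target K i j x) (tgt i j x h) =
      ((-1 : K) ^ (x.1.1.filter (fun a => a < i)).card) * (x.1.2 j : K) := by
  rw [target_eq i j x h]
  show ((((-1 : K) ^ (x.1.1.filter (fun a => a < i)).card) * (x.1.2 j : K)) •
      Finsupp.single (tgt i j x h) (1:K) : Idx m n k →₀ K) (tgt i j x h) = _
  rw [Finsupp.smul_apply, Finsupp.single_eq_same]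
  simp

lemma e_apply_at (i : Fin m) (j : Fin n) (v : V K m n k) (y : Idx m n k) :
    toF (e K i j v) y = ∑ x ∈ (toF v).support, toF v x * toF (target K i j x) y := by
  have h1 : e K i j v = ∑ x ∈ (toF v).support, toF v x • target K i j x := rfl
  rw [h1, map_sum, Finsupp.finset_sum_apply]
  exact Finset.sum_congr rfl fun x _ => by rw [toF_smul, Finsupp.smul_apply, smul_eq_mul]

end stmt11

/-- over a field of characteristic `p`, the common kernel of the
operators `e_{ij}` on `V_k` is spanned by the basis vectors `w₊^I w₋^β` with either
`|I| < m` and all `β_t` divisible by `p`, or `I = {1,…,m}` (which requires `k ≥ m`). -/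
theorem stmt_11 (K : Type*) [Field K] (p : ℕ) (hp : p.Prime) [CharP K p]
    (m n k : ℕ) (hm : 1 ≤ m) (hn : 1 ≤ n) :
    (⨅ (i : Fin m) (j : Fin n), LinearMap.ker (stmt11.e K (m := m) (n := n) (k := k) i j)) =
      Submodule.span K
        {v : stmt11.V K m n k | ∃ x : stmt11.Idx m n k,
          ((x.1.1.card < m ∧ ∀ t, p ∣ x.1.2 t) ∨ x.1.1.card = m) ∧
            v = Finsupp.single x 1} := by
  apply le_antisymm
  · -- kernel ≤ span
    intro v hv
    simp only [Submodule.mem_iInf, LinearMap.mem_ker] at hv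
    have key : ∀ x ∈ (stmt11.toF v).support,
        (x.1.1.card < m ∧ ∀ t, p ∣ x.1.2 t) ∨ x.1.1.card = m := by
      intro x hx
      by_cases hcard : x.1.1.card = m
      · exact Or.inr hcard
      · refine Or.inl ⟨lt_of_le_of_ne (by simpa using Finset.card_le_univ x.1.1) hcard,
          fun t => ?_⟩
        by_cases ht : x.1.2 t = 0
        · simp [ht]
        · obtain ⟨i, hi⟩ : ∃ i, i ∉ x.1.1 := by
            by_contra hc; push_neg at hc
            exact hcard (by rw [Finset.eq_univ_iff_forall.2 hc]; simp)
          have h2 : i ∉ x.1.1 ∧ x.1.2 t ≠ 0 := ⟨hi, ht⟩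
          have h0 : stmt11.toF (stmt11.e K i t v) (stmt11.tgt i t x h2) = 0 := by
            rw [hv i t, map_zero]; rfl
          rw [stmt11.e_apply_at, Finset.sum_eq_single x
            (fun b _ hb => by rw [stmt11.target_at_ne i t h2 hb, mul_zero])
            (fun hx' => absurd hx hx'), stmt11.target_at_self i t h2] at h0
          have hvx : stmt11.toF v x ≠ 0 := Finsupp.mem_support_iff.mp hx
          have hsgn : ((-1 : K) ^ (x.1.1.filter (fun a => a < i)).card) ≠ 0 := by simp
          have hc0 : (x.1.2 t : K) = 0 := by
            rcases mul_eq_zero.mp h0 with h | h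
            · exact absurd h hvx
            · rcases mul_eq_zero.mp h with h | h
              · exact absurd h hsgn
              · exact h
          exact (CharP.cast_eq_zero_iff K p _).mp hc0
    have hrep : v = ∑ x ∈ (stmt11.toF v).support,
        (stmt11.toF v x) • (Finsupp.single x 1 : stmt11.V K m n k) := by
      apply stmt11.toF_inj
      show stmt11.toF v = ∑ x ∈ (stmt11.toF v).support,
        (stmt11.toF v x) • (Finsupp.single x 1 : stmt11.Idx m n k →₀ K)
      simp only [Finsupp.smul_single', mul_one]
      exact (Finsupp.sum_single (stmt11.toF v)).symm
    rw [hrep]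
    exact Submodule.sum_mem _ fun x hx => Submodule.smul_mem _ _
      (Submodule.subset_span ⟨x, key x hx, rfl⟩)
  · -- span ≤ kernel
    rw [Submodule.span_le]
    rintro _ ⟨x, hx, rfl⟩
    refine (Submodule.mem_iInf _).mpr fun i => (Submodule.mem_iInf _).mpr fun j => ?_
    show stmt11.e K i j (Finsupp.single x 1) = 0
    rw [stmt11.e_single]
    rcases hx with ⟨hlt, hdvd⟩ | hcard
    · by_cases hj : x.1.2 j = 0
      · exact stmt11.target_eq_zero i j x (by simp [hj])
      · by_cases hi : i ∈ x.1.1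
        · exact stmt11.target_eq_zero i j x (by simp [hi])
        · rw [stmt11.target_eq i j x ⟨hi, hj⟩,
            show ((x.1.2 j : K)) = 0 from (CharP.cast_eq_zero_iff K p _).mpr (hdvd j),
            mul_zero]
          exact zero_smul K (Finsupp.single _ (1:K) : stmt11.Idx m n k →₀ K)
    · have huniv : x.1.1 = Finset.univ :=
        Finset.eq_univ_of_card _ (by simpa using hcard)
      exact stmt11.target_eq_zero i j x (by simp [huniv])
end
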